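/- Let λ > 1, β₀ = arccos(1/λ), and for small α > 0 set β = α + β₀, P(α) = 2(α + λ(sin α/sin β)(π−β)) and A(α) = λ[α − sin α cos α + (sin α/sin β)²(π − β + sin β cos β)]. Then lim_{α→0} P(α)²/A(α) = 4 sin β₀ (1 + (π−β₀)/(sin β₀ cos β₀)), and this limit is strictly greater than 4π. -/

import Mathlib

open Real Filter Set

private lemma sinx_div_x_tendsto :
    Filter.Tendsto (fun x : ℝ => Real.sin x / x) (nhdsWithin 0 (Set.Ioi 0)) (nhds 1) := by
  have h : HasDerivAt Real.sin 1 0 := by simpa using Real.hasDerivAt_sin 0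
  have h2 := hasDerivAt_iff_tendsto_slope.mp h
  have h3 : (slope Real.sin 0) = fun x => Real.sin x / x := by
    funext x; simp [slope_def_field]
  rw [h3] at h2
  exact h2.mono_left (nhdsWithin_mono _ (fun x hx => by simpa using ne_of_gt hx))

private lemma g_pos (β : ℝ) (h0 : 0 < β) (h2 : β < π / 2) :
    0 < π * (1 - Real.cos β) - β + Real.sin β * Real.cos β := by
  set g : ℝ → ℝ := fun x => π * (1 - Real.cos x) - x + Real.sin x * Real.cos x with hg
  have hderiv : ∀ x : ℝ, HasDerivAt g (Real.sin x * (π - 2 * Real.sin x)) x := by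
    intro x
    have h1 : HasDerivAt g
        (0 * (1 - Real.cos x) + π * (0 - -Real.sin x) - 1 +
          (Real.cos x * Real.cos x + Real.sin x * -Real.sin x)) x :=
      (((hasDerivAt_const x π).mul ((hasDerivAt_const x (1:ℝ)).sub (Real.hasDerivAt_cos x))).sub
        (hasDerivAt_id x)).add ((Real.hasDerivAt_sin x).mul (Real.hasDerivAt_cos x))
    convert h1 using 1
    nlinarith [Real.sin_sq_add_cos_sq x]
  have hmono : StrictMonoOn g (Set.Icc 0 (π / 2)) := by
    apply strictMonoOn_of_deriv_pos (convex_Icc _ _)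
    · exact fun x _ => (hderiv x).continuousAt.continuousWithinAt
    · intro x hx
      rw [interior_Icc] at hx
      rw [(hderiv x).deriv]
      have hsx : 0 < Real.sin x := Real.sin_pos_of_pos_of_lt_pi hx.1 (by linarith [hx.2, Real.pi_pos])
      have hs1 : Real.sin x ≤ 1 := Real.sin_le_one x
      nlinarith [Real.pi_gt_three]
  have hge := hmono (Set.left_mem_Icc.2 (by positivity)) (Set.mem_Icc.2 ⟨h0.le, h2.le⟩) h0
  simpa [hg] using hge

theorem small_cap_ratio_limit (lam : ℝ) (hlam : 1 < lam) :
    Filter.Tendsto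
      (fun α : ℝ =>
        (2 * (α + lam * (sin α / sin (α + arccos (1 / lam))) *
            (π - (α + arccos (1 / lam))))) ^ 2 /
          (lam * (α - sin α * cos α +
            (sin α / sin (α + arccos (1 / lam))) ^ 2 *
              (π - (α + arccos (1 / lam)) +
                sin (α + arccos (1 / lam)) * cos (α + arccos (1 / lam))))))
      (nhdsWithin 0 (Set.Ioi 0))
      (nhds (4 * sin (arccos (1 / lam)) *
        (1 + (π - arccos (1 / lam)) /
          (sin (arccos (1 / lam)) * cos (arccos (1 / lam)))))) ∧
    4 * π < 4 * sin (arccos (1 / lam)) *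
      (1 + (π - arccos (1 / lam)) /
        (sin (arccos (1 / lam)) * cos (arccos (1 / lam)))) := by
  have hlam0 : 0 < lam := by linarith
  set c : ℝ := 1 / lam with hc
  have hc0 : 0 < c := by positivity
  have hc1 : c < 1 := by rw [hc, div_lt_one hlam0]; exact hlam
  set b := Real.arccos c with hb
  have hbpos : 0 < b := Real.arccos_pos.2 hc1
  have hblt : b < π / 2 := Real.arccos_lt_pi_div_two.2 hc0
  have hcos : Real.cos b = c := Real.cos_arccos (by linarith) hc1.le
  have hpi : 0 < π := Real.pi_pos
  have hbpi : b < π := by linarith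
  have hs : 0 < Real.sin b := Real.sin_pos_of_pos_of_lt_pi hbpos hbpi
  have hlamc : lam = 1 / c := by rw [hc]; field_simp
  -- limits of the pieces
  have hqlim : Tendsto (fun α : ℝ => Real.sin α / α) (nhdsWithin 0 (Set.Ioi 0)) (nhds 1) :=
    sinx_div_x_tendsto
  have hadd : Tendsto (fun α : ℝ => α + b) (nhdsWithin 0 (Set.Ioi 0)) (nhds b) := by
    have h : Tendsto (fun α : ℝ => α + b) (nhds 0) (nhds (0 + b)) :=
      (continuous_id.add continuous_const).tendsto 0
    rw [zero_add] at h
    exact h.mono_left nhdsWithin_le_nhds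
  have hsinb : Tendsto (fun α : ℝ => Real.sin (α + b)) (nhdsWithin 0 (Set.Ioi 0)) (nhds (Real.sin b)) :=
    (Real.continuous_sin.tendsto b).comp hadd
  have hcosb : Tendsto (fun α : ℝ => Real.cos (α + b)) (nhdsWithin 0 (Set.Ioi 0)) (nhds (Real.cos b)) :=
    (Real.continuous_cos.tendsto b).comp hadd
  have hpib : Tendsto (fun α : ℝ => π - (α + b)) (nhdsWithin 0 (Set.Ioi 0)) (nhds (π - b)) :=
    tendsto_const_nhds.sub hadd
  have he : Tendsto (fun α : ℝ => (α - Real.sin α * Real.cos α) / α ^ 2)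
      (nhdsWithin 0 (Set.Ioi 0)) (nhds 0) := by
    apply squeeze_zero' (g := fun α : ℝ => α)
    · filter_upwards [self_mem_nhdsWithin] with α hα
      have hα0 : (0:ℝ) < α := hα
      have h1 : Real.sin (2 * α) < 2 * α := Real.sin_lt (by linarith)
      have h2 : Real.sin (2 * α) = 2 * Real.sin α * Real.cos α := Real.sin_two_mul α
      apply div_nonneg _ (by positivity)
      nlinarith
    · filter_upwards [Ioo_mem_nhdsGT_of_mem (Set.mem_Ico.2 ⟨le_refl (0:ℝ), (by norm_num : (0:ℝ) < 1/2)⟩)]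
        with α hα
      obtain ⟨hα0, hα2⟩ := hα
      have hcube : (2 * α) - (2 * α) ^ 3 / 4 < Real.sin (2 * α) :=
        lt_of_le_of_lt (by have := pow_pos (by linarith : (0:ℝ) < 2 * α) 3; linarith)
          (Real.sin_gt_sub_cube (by linarith))
      rw [div_le_iff₀ (by positivity)]
      nlinarith [Real.sin_two_mul α]
    · exact (continuous_id.tendsto 0).mono_left nhdsWithin_le_nhds
  have h1 : Tendsto (fun α : ℝ => (π - (α + b)) / Real.sin (α + b))
      (nhdsWithin 0 (Set.Ioi 0)) (nhds ((π - b) / Real.sin b)) := hpib.div hsinb hs.ne'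
  have h2 : Tendsto (fun α : ℝ => lam * (Real.sin α / α) * ((π - (α + b)) / Real.sin (α + b)))
      (nhdsWithin 0 (Set.Ioi 0)) (nhds (lam * 1 * ((π - b) / Real.sin b))) :=
    (tendsto_const_nhds.mul hqlim).mul h1
  have hnum : Tendsto
      (fun α : ℝ => (2 * (1 + lam * (Real.sin α / α) * ((π - (α + b)) / Real.sin (α + b)))) ^ 2)
      (nhdsWithin 0 (Set.Ioi 0)) (nhds ((2 * (1 + lam * 1 * ((π - b) / Real.sin b))) ^ 2)) :=
    ((tendsto_const_nhds.add h2).const_mul 2).pow 2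
  have h3 : Tendsto
      (fun α : ℝ => (π - (α + b) + Real.sin (α + b) * Real.cos (α + b)) / (Real.sin (α + b)) ^ 2)
      (nhdsWithin 0 (Set.Ioi 0))
      (nhds ((π - b + Real.sin b * Real.cos b) / (Real.sin b) ^ 2)) :=
    (hpib.add (hsinb.mul hcosb)).div (hsinb.pow 2) (pow_ne_zero 2 hs.ne')
  have hden : Tendsto
      (fun α : ℝ => lam * ((α - Real.sin α * Real.cos α) / α ^ 2 +
        (Real.sin α / α) ^ 2 * ((π - (α + b) + Real.sin (α + b) * Real.cos (α + b)) / (Real.sin (α + b)) ^ 2)))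
      (nhdsWithin 0 (Set.Ioi 0))
      (nhds (lam * (0 + 1 ^ 2 * ((π - b + Real.sin b * Real.cos b) / (Real.sin b) ^ 2)))) :=
    (he.add ((hqlim.pow 2).mul h3)).const_mul lam
  have hub : 0 < π - b + Real.sin b * Real.cos b := by
    have : 0 < Real.sin b * Real.cos b := mul_pos hs (hcos ▸ hc0)
    linarith
  have hD0ne : lam * (0 + 1 ^ 2 * ((π - b + Real.sin b * Real.cos b) / (Real.sin b) ^ 2)) ≠ 0 := by
    have : 0 < (π - b + Real.sin b * Real.cos b) / (Real.sin b) ^ 2 := div_pos hub (by positivity)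
    positivity
  have hG := hnum.div hden hD0ne
  have hval : (2 * (1 + lam * 1 * ((π - b) / Real.sin b))) ^ 2 /
      (lam * (0 + 1 ^ 2 * ((π - b + Real.sin b * Real.cos b) / (Real.sin b) ^ 2)))
      = 4 * Real.sin b * (1 + (π - b) / (Real.sin b * Real.cos b)) := by
    have hub' : π - b + Real.sin b * c ≠ 0 :=
      ne_of_gt (by nlinarith [mul_pos hs hc0])
    have hub'' : c * Real.sin b + π - b ≠ 0 := by intro h; apply hub'; linarith
    rw [hcos, hlamc]
    field_simp
    linear_combination (4 * (c * Real.sin b + π - b)) * mul_inv_cancel₀ hub''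
  rw [hval] at hG
  constructor
  · apply hG.congr'
    filter_upwards [Ioo_mem_nhdsGT_of_mem (Set.mem_Ico.2 ⟨le_refl (0:ℝ), (by linarith : (0:ℝ) < π - b)⟩)]
      with α hα
    obtain ⟨hα0, hα2⟩ := hα
    have hαne : α ≠ 0 := ne_of_gt hα0
    simp only [Pi.div_apply]
    have hsab : 0 < Real.sin (α + b) := Real.sin_pos_of_pos_of_lt_pi (by linarith) (by linarith)
    have hN : (2 * (α + lam * (Real.sin α / Real.sin (α + b)) * (π - (α + b)))) ^ 2
        = α ^ 2 * (2 * (1 + lam * (Real.sin α / α) * ((π - (α + b)) / Real.sin (α + b)))) ^ 2 := by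
      field_simp
    have hD : lam * (α - Real.sin α * Real.cos α +
          (Real.sin α / Real.sin (α + b)) ^ 2 * (π - (α + b) + Real.sin (α + b) * Real.cos (α + b)))
        = α ^ 2 * (lam * ((α - Real.sin α * Real.cos α) / α ^ 2 +
          (Real.sin α / α) ^ 2 * ((π - (α + b) + Real.sin (α + b) * Real.cos (α + b)) / (Real.sin (α + b)) ^ 2))) := by
      field_simp
    rw [hN, hD, mul_div_mul_left _ _ (pow_ne_zero 2 hαne)]
  · rw [hcos]
    have hkey : 0 < π * (1 - c) - b + Real.sin b * c := by
      have := g_pos b hbpos hblt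
      rw [hcos] at this
      exact this
    have hdiv : π - Real.sin b < (π - b) / c := by
      rw [lt_div_iff₀ hc0]
      nlinarith
    have hsplit : 4 * Real.sin b * (1 + (π - b) / (Real.sin b * c))
        = 4 * (Real.sin b + (π - b) / c) := by
      field_simp
    rw [hsplit]
    linarith
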